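/- Let G=(V,E) be a connected simple graph not isomorphic to a star, let G'=(V',E') = σ(G), and let k be an integer with 1 ≤ k ≤ |V|−2. Then G has an independent set of size at least k if and only if there exists S ⊊ V' of size at least |E|+2+k such that G'[S] is a proportionally dense subgraph. -/

import Mathlib

open SimpleGraph

/-- Number of neighbors of `v` inside `T`. -/
noncomputable def degIn {W : Type*} (G : SimpleGraph W) (T : Set W) (v : W) : ℕ :=
  (T ∩ G.neighborSet v).ncard

/-- `G[S]` is a proportionally dense subgraph. -/
def IsPDS {W : Type*} (G : SimpleGraph W) (S : Set W) : Prop :=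
  S ⊂ Set.univ ∧ 2 ≤ S.ncard ∧
    ∀ u ∈ S, degIn G Sᶜ u * (S.ncard - 1) ≤ degIn G S u * Sᶜ.ncard

/-- A star is a complete bipartite graph `K_{1,ℓ}`, `ℓ ≥ 1`. -/
def IsStar {V : Type*} (G : SimpleGraph V) : Prop :=
  ∃ ℓ : ℕ, 1 ≤ ℓ ∧ Nonempty (G ≃g completeBipartiteGraph Unit (Fin ℓ))

/-- Vertex type of the split graph `σ(G)`: `z1, z2` (the two booleans), `M` (edge
vertices), and `N = V`. -/
abbrev SigmaVert (V : Type*) (G : SimpleGraph V) : Type _ := (Bool ⊕ ↥G.edgeSet) ⊕ V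

/-- The split graph `σ(G)`. -/
def sigmaGraph {V : Type*} (G : SimpleGraph V) : SimpleGraph (SigmaVert V G) where
  Adj x y :=
    match x, y with
    | Sum.inl a, Sum.inl b => a ≠ b
    | Sum.inl (Sum.inr e), Sum.inr u => u ∉ (e : Sym2 V)
    | Sum.inr u, Sum.inl (Sum.inr e) => u ∉ (e : Sym2 V)
    | _, _ => False
  symm := by
    constructor
    rintro ((a | e) | u) ((b | f) | v) h <;> simp_all <;> tauto
  loopless := by
    constructor
    rintro ((a | e) | u) h <;> simp_all

/-- The set `M ∪ {z1, z2}` (the clique side) in `σ(G)`. -/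
def sigmaClique {V : Type*} (G : SimpleGraph V) : Set (SigmaVert V G) :=
  Set.range Sum.inl

/-- The set `M` of edge-vertices in `σ(G)`. -/
def sigmaM {V : Type*} (G : SimpleGraph V) : Set (SigmaVert V G) :=
  Set.range (fun e : ↥G.edgeSet => Sum.inl (Sum.inr e))

/-! ### Auxiliary lemmas -/

set_option linter.unusedSectionVars false

section AuxiliaryLemmas

theorem aux_exists_adj_dist_lt {V : Type*} (G : SimpleGraph V) (hconn : G.Connected)
    (r v : V) (h : v ≠ r) :
    ∃ w, G.Adj v w ∧ G.dist r w < G.dist r v := by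
  obtain ⟨p, hp⟩ := hconn.exists_walk_length_eq_dist r v
  have hq : (p.reverse).length = G.dist r v := by simpa using hp
  generalize p.reverse = q at hq
  cases q with
  | nil => exact absurd rfl h
  | @cons _ w _ hadj q' =>
    refine ⟨w, hadj, ?_⟩
    have := SimpleGraph.dist_le q'.reverse
    simp only [Walk.length_reverse] at this
    simp only [Walk.length_cons] at hq
    omega

theorem aux_conn_card_bound {V : Type*} [Fintype V] (G : SimpleGraph V) (hconn : G.Connected) :
    Fintype.card V ≤ G.edgeSet.ncard + 1 := by
  classical
  obtain ⟨r⟩ := hconn.nonempty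
  have hex : ∀ v : V, v ≠ r → ∃ w, G.Adj v w ∧ G.dist r w < G.dist r v :=
    fun v hv => aux_exists_adj_dist_lt G hconn r v hv
  choose g hg1 hg2 using fun v : V => fun hv : v ≠ r => hex v hv
  set f : V → Sym2 V := fun v => if hv : v ≠ r then s(v, g v hv) else s(r, r) with hf
  have hinj : Set.InjOn f {v | v ≠ r} := by
    intro a ha b hb hab
    simp only [Set.mem_setOf_eq] at ha hb
    simp only [hf, dif_pos ha, dif_pos hb] at hab
    rw [Sym2.eq_iff] at hab
    rcases hab with ⟨h1, h2⟩ | ⟨h1, h2⟩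
    · exact h1
    · have da := hg2 a ha
      have db := hg2 b hb
      rw [h2] at da
      rw [← h1] at db
      omega
  have hsub : f '' {v | v ≠ r} ⊆ G.edgeSet := by
    rintro _ ⟨a, ha, rfl⟩
    simp only [Set.mem_setOf_eq] at ha
    simp only [hf, dif_pos ha]
    exact (hg1 a ha)
  have h1 : ({v : V | v ≠ r}).ncard = Fintype.card V - 1 := by
    have hc : ({v : V | v ≠ r}) = {r}ᶜ := by ext x; simp
    rw [hc]
    have := Set.ncard_add_ncard_compl ({r} : Set V)
    simp only [Set.ncard_singleton, Nat.card_eq_fintype_card] at this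
    omega
  have h2 : (f '' {v | v ≠ r}).ncard = ({v : V | v ≠ r}).ncard := Set.ncard_image_of_injOn hinj
  have h3 := Set.ncard_le_ncard hsub (Set.toFinite _)
  have : Nonempty V := ⟨r⟩
  have : 1 ≤ Fintype.card V := Fintype.card_pos
  omega

variable {V : Type*} [Fintype V] (G : SimpleGraph V)

lemma sigma_adj_ll (a b : Bool ⊕ ↥G.edgeSet) :
    (sigmaGraph G).Adj (Sum.inl a) (Sum.inl b) ↔ a ≠ b := by
  rcases a with a | e <;> rcases b with b | f <;> exact Iff.rfl
lemma sigma_adj_er (e : ↥G.edgeSet) (u : V) :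
    (sigmaGraph G).Adj (Sum.inl (Sum.inr e)) (Sum.inr u) ↔ u ∉ (e : Sym2 V) := Iff.rfl
lemma sigma_adj_re (e : ↥G.edgeSet) (u : V) :
    (sigmaGraph G).Adj (Sum.inr u) (Sum.inl (Sum.inr e)) ↔ u ∉ (e : Sym2 V) := Iff.rfl
lemma sigma_adj_br (b : Bool) (u : V) :
    ¬ (sigmaGraph G).Adj (Sum.inl (Sum.inl b)) (Sum.inr u) := fun h => h
lemma sigma_adj_rb (b : Bool) (u : V) :
    ¬ (sigmaGraph G).Adj (Sum.inr u) (Sum.inl (Sum.inl b)) := fun h => h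
lemma sigma_adj_rr (u v : V) :
    ¬ (sigmaGraph G).Adj (Sum.inr u) (Sum.inr v) := fun h => h

/-- The `z`-part of a set of vertices of `σ(G)`. -/
def pB (T : Set (SigmaVert V G)) : Set Bool := {b | Sum.inl (Sum.inl b) ∈ T}
/-- The `M`-part of a set of vertices of `σ(G)`. -/
def pM (T : Set (SigmaVert V G)) : Set ↥G.edgeSet := {e | Sum.inl (Sum.inr e) ∈ T}
/-- The `N`-part of a set of vertices of `σ(G)`. -/
def pN (T : Set (SigmaVert V G)) : Set V := {v | Sum.inr v ∈ T}

lemma pB_compl (T : Set (SigmaVert V G)) : pB G Tᶜ = (pB G T)ᶜ := rfl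
lemma pM_compl (T : Set (SigmaVert V G)) : pM G Tᶜ = (pM G T)ᶜ := rfl
lemma pN_compl (T : Set (SigmaVert V G)) : pN G Tᶜ = (pN G T)ᶜ := rfl

lemma ncard_decomp (T : Set (SigmaVert V G)) :
    T.ncard = (pB G T).ncard + (pM G T).ncard + (pN G T).ncard := by
  classical
  have hT : T = (fun b => (Sum.inl (Sum.inl b) : SigmaVert V G)) '' pB G T
      ∪ ((fun e => (Sum.inl (Sum.inr e) : SigmaVert V G)) '' pM G T
      ∪ (Sum.inr '' pN G T)) := by
    ext x
    rcases x with (b | e) | v <;>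
      simp [pB, pM, pN]
  have hd1 : Disjoint ((fun b => (Sum.inl (Sum.inl b) : SigmaVert V G)) '' pB G T)
      ((fun e => (Sum.inl (Sum.inr e) : SigmaVert V G)) '' pM G T ∪ (Sum.inr '' pN G T)) := by
    rw [Set.disjoint_left]
    rintro x ⟨b, -, rfl⟩ (⟨e, -, h⟩ | ⟨v, -, h⟩) <;> simp at h
  have hd2 : Disjoint ((fun e => (Sum.inl (Sum.inr e) : SigmaVert V G)) '' pM G T)
      (Sum.inr '' pN G T) := by
    rw [Set.disjoint_left]
    rintro x ⟨e, -, rfl⟩ ⟨v, -, h⟩; simp at h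
  conv_lhs => rw [hT]
  rw [Set.ncard_union_eq hd1 (Set.toFinite _) (Set.toFinite _),
    Set.ncard_union_eq hd2 (Set.toFinite _) (Set.toFinite _),
    Set.ncard_image_of_injective _ (fun a b h => by simpa using h),
    Set.ncard_image_of_injective _ (fun a b h => by simpa using h),
    Set.ncard_image_of_injective _ Sum.inr_injective]
  ring

lemma degIn_z (T : Set (SigmaVert V G)) (b : Bool) :
    degIn (sigmaGraph G) T (Sum.inl (Sum.inl b)) = (pB G T \ {b}).ncard + (pM G T).ncard := by
  rw [degIn, ncard_decomp]
  have h1 : pB G (T ∩ (sigmaGraph G).neighborSet (Sum.inl (Sum.inl b))) = pB G T \ {b} := by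
    ext c
    simp only [pB, Set.mem_setOf_eq, Set.mem_inter_iff, mem_neighborSet, sigma_adj_ll,
      Set.mem_diff, Set.mem_singleton_iff, ne_eq, Sum.inl.injEq]
    tauto
  have h2 : pM G (T ∩ (sigmaGraph G).neighborSet (Sum.inl (Sum.inl b))) = pM G T := by
    ext e
    simp only [pM, Set.mem_setOf_eq, Set.mem_inter_iff, mem_neighborSet, sigma_adj_ll]
    simp
  have h3 : pN G (T ∩ (sigmaGraph G).neighborSet (Sum.inl (Sum.inl b))) = ∅ := by
    ext v
    simp only [pN, Set.mem_setOf_eq, Set.mem_inter_iff, mem_neighborSet]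
    simpa using fun _ => sigma_adj_br G b v
  rw [h1, h2, h3]
  simp

lemma degIn_e (T : Set (SigmaVert V G)) (e : ↥G.edgeSet) :
    degIn (sigmaGraph G) T (Sum.inl (Sum.inr e)) =
      (pB G T).ncard + (pM G T \ {e}).ncard + (pN G T ∩ {u | u ∉ (e : Sym2 V)}).ncard := by
  rw [degIn, ncard_decomp]
  have h1 : pB G (T ∩ (sigmaGraph G).neighborSet (Sum.inl (Sum.inr e))) = pB G T := by
    ext c
    simp only [pB, Set.mem_setOf_eq, Set.mem_inter_iff, mem_neighborSet, sigma_adj_ll]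
    simp
  have h2 : pM G (T ∩ (sigmaGraph G).neighborSet (Sum.inl (Sum.inr e))) = pM G T \ {e} := by
    ext f
    simp only [pM, Set.mem_setOf_eq, Set.mem_inter_iff, mem_neighborSet, sigma_adj_ll,
      Set.mem_diff, Set.mem_singleton_iff, ne_eq, Sum.inr.injEq]
    tauto
  have h3 : pN G (T ∩ (sigmaGraph G).neighborSet (Sum.inl (Sum.inr e))) =
      pN G T ∩ {u | u ∉ (e : Sym2 V)} := by
    ext v
    simp only [pN, Set.mem_setOf_eq, Set.mem_inter_iff, mem_neighborSet, sigma_adj_er]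
  rw [h1, h2, h3]

lemma degIn_v (T : Set (SigmaVert V G)) (u : V) :
    degIn (sigmaGraph G) T (Sum.inr u) = (pM G T ∩ {e : ↥G.edgeSet | u ∉ (e : Sym2 V)}).ncard := by
  rw [degIn, ncard_decomp]
  have h1 : pB G (T ∩ (sigmaGraph G).neighborSet (Sum.inr u)) = ∅ := by
    ext c
    simp only [pB, Set.mem_setOf_eq, Set.mem_inter_iff, mem_neighborSet]
    simpa using fun _ => sigma_adj_rb G c u
  have h2 : pM G (T ∩ (sigmaGraph G).neighborSet (Sum.inr u)) =
      pM G T ∩ {e : ↥G.edgeSet | u ∉ (e : Sym2 V)} := by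
    ext f
    simp only [pM, Set.mem_setOf_eq, Set.mem_inter_iff, mem_neighborSet, sigma_adj_re]
  have h3 : pN G (T ∩ (sigmaGraph G).neighborSet (Sum.inr u)) = ∅ := by
    ext v
    simp only [pN, Set.mem_setOf_eq, Set.mem_inter_iff, mem_neighborSet]
    simpa using fun _ => sigma_adj_rr G u v
  rw [h1, h2, h3]
  simp

lemma ends_spec (e : ↥G.edgeSet) :
    ∃ x y : V, G.Adj x y ∧ {v : V | v ∈ (e : Sym2 V)} = {x, y} := by
  obtain ⟨e, he⟩ := e
  induction e using Sym2.ind with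
  | _ x y =>
    exact ⟨x, y, (G.mem_edgeSet).1 he, by ext v; simp [Sym2.mem_iff]⟩

lemma extract_indep (j : ℕ) : ∀ T : Set V,
    {e : ↥G.edgeSet | ∀ v ∈ (e : Sym2 V), v ∈ T}.ncard ≤ j →
    ∃ I ⊆ T, I.Pairwise (fun a b => ¬ G.Adj a b) ∧ T.ncard ≤ I.ncard + j := by
  induction j with
  | zero =>
    intro T hT
    by_cases hp : T.Pairwise (fun a b => ¬ G.Adj a b)
    · exact ⟨T, subset_rfl, hp, by omega⟩
    · exfalso
      have hab : ∃ a ∈ T, ∃ b ∈ T, a ≠ b ∧ G.Adj a b := by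
        by_contra hco
        push_neg at hco
        exact hp (fun x hx y hy hxy => hco x hx y hy hxy)
      obtain ⟨a, ha, b, hb, -, hadj⟩ := hab
      have he0 : (⟨s(a, b), G.mem_edgeSet.2 hadj⟩ : ↥G.edgeSet) ∈
          {e : ↥G.edgeSet | ∀ v ∈ (e : Sym2 V), v ∈ T} := by
        intro v hv
        rw [Sym2.mem_iff] at hv
        rcases hv with rfl | rfl <;> assumption
      have := (Set.ncard_pos (Set.toFinite _)).2 ⟨_, he0⟩
      omega
  | succ j ih =>
    intro T hT
    by_cases hp : T.Pairwise (fun a b => ¬ G.Adj a b)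
    · exact ⟨T, subset_rfl, hp, by omega⟩
    · have hab : ∃ a ∈ T, ∃ b ∈ T, a ≠ b ∧ G.Adj a b := by
        by_contra hco
        push_neg at hco
        exact hp (fun x hx y hy hxy => hco x hx y hy hxy)
      obtain ⟨a, ha, b, hb, -, hadj⟩ := hab
      set e0 : ↥G.edgeSet := ⟨s(a, b), G.mem_edgeSet.2 hadj⟩ with he0def
      have he0 : e0 ∈ {e : ↥G.edgeSet | ∀ v ∈ (e : Sym2 V), v ∈ T} := by
        intro v hv
        rw [he0def] at hv
        rw [Sym2.mem_iff] at hv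
        rcases hv with rfl | rfl <;> assumption
      have hsub : {e : ↥G.edgeSet | ∀ v ∈ (e : Sym2 V), v ∈ T \ {a}} ⊆
          {e : ↥G.edgeSet | ∀ v ∈ (e : Sym2 V), v ∈ T} \ {e0} := by
        intro e he
        constructor
        · exact fun v hv => (he v hv).1
        · intro hee
          rw [Set.mem_singleton_iff] at hee
          subst hee
          have hae : a ∈ (e0 : Sym2 V) := by rw [he0def]; exact Sym2.mem_mk_left a b
          exact (he a hae).2 rfl
      have hcount : {e : ↥G.edgeSet | ∀ v ∈ (e : Sym2 V), v ∈ T \ {a}}.ncard ≤ j := by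
        have h1 := Set.ncard_le_ncard hsub (Set.toFinite _)
        have h2 := Set.ncard_diff_singleton_add_one he0 (Set.toFinite _)
        omega
      obtain ⟨I, hIsub, hIp, hInum⟩ := ih (T \ {a}) hcount
      have hTcard := Set.ncard_diff_singleton_add_one ha (Set.toFinite T)
      exact ⟨I, hIsub.trans Set.diff_subset, hIp, by omega⟩

end AuxiliaryLemmas

/-- Theorem 1 of the paper (correctness of the split-graph reduction): `G` has an
independent set of size at least `k` iff `σ(G)` has a PDS of size at least
`|E| + 2 + k`. -/
theorem sigma_reduction_correct {V : Type*} [Fintype V] (G : SimpleGraph V)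
    (hconn : G.Connected) (hstar : ¬ IsStar G)
    (k : ℕ) (hk1 : 1 ≤ k) (hk2 : k ≤ Fintype.card V - 2) :
    (∃ I : Set V, I.Pairwise (fun a b => ¬ G.Adj a b) ∧ k ≤ I.ncard)
      ↔ (∃ S : Set (SigmaVert V G),
          IsPDS (sigmaGraph G) S ∧ G.edgeSet.ncard + 2 + k ≤ S.ncard) := by
  classical
  set n := Fintype.card V with hn_def
  set m := G.edgeSet.ncard with hm_def
  have hm : n ≤ m + 1 := aux_conn_card_bound G hconn
  have hn : k + 2 ≤ n := by omega
  have nB : (Set.univ : Set Bool).ncard = 2 := by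
    rw [Set.ncard_univ, Nat.card_eq_fintype_card, Fintype.card_bool]
  have nM : (Set.univ : Set ↥G.edgeSet).ncard = m := by
    rw [Set.ncard_univ, Nat.card_coe_set_eq]
  have nV : ∀ A : Set V, A.ncard + Aᶜ.ncard = n := fun A => by
    rw [Set.ncard_add_ncard_compl, Nat.card_eq_fintype_card]
  constructor
  · rintro ⟨I, hI, hkI⟩
    obtain ⟨I', hI'sub, hI'card⟩ := Set.exists_subset_card_eq hkI
    have hI' : I'.Pairwise (fun a b => ¬ G.Adj a b) := hI.mono hI'sub
    set S : Set (SigmaVert V G) := Set.range Sum.inl ∪ Sum.inr '' I' with hSdef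
    have hmemN : ∀ v : V, (Sum.inr v ∈ S ↔ v ∈ I') := by
      intro v; simp [hSdef]
    have hpB : pB G S = Set.univ := by
      ext b; simp [pB, hSdef]
    have hpM : pM G S = Set.univ := by
      ext e; simp [pM, hSdef]
    have hpN : pN G S = I' := by
      ext v; simpa [pN] using hmemN v
    have hpBc : pB G Sᶜ = ∅ := by rw [pB_compl, hpB, Set.compl_univ]
    have hpMc : pM G Sᶜ = ∅ := by rw [pM_compl, hpM, Set.compl_univ]
    have hpNc : pN G Sᶜ = I'ᶜ := by rw [pN_compl, hpN]
    have hcard : S.ncard = 2 + m + k := by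
      rw [ncard_decomp, hpB, hpM, hpN, nB, nM, hI'card]
    set c := I'ᶜ.ncard with hc_def
    have hc : k + c = n := by rw [← hI'card]; exact nV I'
    have hccard : Sᶜ.ncard = c := by
      rw [ncard_decomp, hpBc, hpMc, hpNc]
      simp [hc_def]
    have hproper : S ⊂ Set.univ := by
      rw [Set.ssubset_univ_iff]
      intro huniv
      have : I' ≠ Set.univ := by
        intro h
        rw [h] at hI'card
        rw [Set.ncard_univ, Nat.card_eq_fintype_card] at hI'card
        omega
      obtain ⟨v0, hv0⟩ := (Set.ne_univ_iff_exists_notMem I').1 this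
      exact hv0 ((hmemN v0).1 (huniv ▸ Set.mem_univ _))
    refine ⟨S, ⟨hproper, by omega, ?_⟩, by omega⟩
    intro u hu
    rcases u with (bb | e) | v
    · rw [degIn_z, hpBc, hpMc]
      simp
    · rw [degIn_e, degIn_e, hpB, hpM, hpN, hpBc, hpMc, hpNc, hccard, hcard, nB]
      obtain ⟨x, y, hxy, hends⟩ := ends_spec G e
      have hcompl : {u : V | u ∉ (e : Sym2 V)} = ({x, y} : Set V)ᶜ := by
        rw [← hends]; rfl
      rw [hcompl]
      have hm1 : (Set.univ \ {e} : Set ↥G.edgeSet).ncard + 1 = m := by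
        rw [← nM]
        exact Set.ncard_diff_singleton_add_one (Set.mem_univ e) (Set.toFinite _)
      set m1 := (Set.univ \ {e} : Set ↥G.edgeSet).ncard with hm1_def
      have hIinter : I' ∩ ({x, y} : Set V)ᶜ = I' \ {x, y} := by rw [Set.diff_eq]
      have hIcinter : I'ᶜ ∩ ({x, y} : Set V)ᶜ = I'ᶜ \ {x, y} := by rw [Set.diff_eq]
      rw [hIinter, hIcinter]
      set a := (I' ∩ ({x, y} : Set V)).ncard with ha_def
      set d := (I' \ ({x, y} : Set V)).ncard with hd_def
      set a2 := (I'ᶜ ∩ ({x, y} : Set V)).ncard with ha2_def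
      set f := (I'ᶜ \ ({x, y} : Set V)).ncard with hf_def
      have had : a + d = k := by
        rw [ha_def, hd_def, ← hI'card]
        exact Set.ncard_inter_add_ncard_diff_eq_ncard I' {x, y} (Set.toFinite _)
      have ha2f : a2 + f = c := by
        rw [ha2_def, hf_def, hc_def]
        exact Set.ncard_inter_add_ncard_diff_eq_ncard I'ᶜ {x, y} (Set.toFinite _)
      have hxyncard : ({x, y} : Set V).ncard = 2 := Set.ncard_pair (G.ne_of_adj hxy)
      have haa2 : a + a2 = 2 := by
        have h1 : ({x, y} : Set V) ∩ I' = I' ∩ {x, y} := Set.inter_comm _ _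
        have h2 : ({x, y} : Set V) \ I' = I'ᶜ ∩ {x, y} := by
          rw [Set.diff_eq, Set.inter_comm]
        have := Set.ncard_inter_add_ncard_diff_eq_ncard ({x, y} : Set V) I' (Set.toFinite _)
        rw [h1, h2, hxyncard] at this
        omega
      have hnotboth : ¬ (x ∈ I' ∧ y ∈ I') := by
        rintro ⟨hx, hy⟩
        exact hI' hx hy (G.ne_of_adj hxy) hxy
      have ha1 : a ≤ 1 := by
        by_cases hx : x ∈ I'
        · have hy : y ∉ I' := fun hy => hnotboth ⟨hx, hy⟩
          have : I' ∩ ({x, y} : Set V) ⊆ {x} := by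
            rintro z ⟨hz1, hz2⟩
            rcases hz2 with rfl | rfl
            · rfl
            · exact absurd hz1 hy
          have := Set.ncard_le_ncard this (Set.toFinite _)
          rw [Set.ncard_singleton] at this; exact this
        · have : I' ∩ ({x, y} : Set V) ⊆ {y} := by
            rintro z ⟨hz1, hz2⟩
            rcases hz2 with rfl | rfl
            · exact absurd hz1 hx
            · rfl
          have := Set.ncard_le_ncard this (Set.toFinite _)
          rw [Set.ncard_singleton] at this; exact this
      have hgoal : (0 + (∅ \ {e} : Set ↥G.edgeSet).ncard + f) * (2 + m + k - 1)
          ≤ (2 + m1 + d) * c → True := fun _ => trivial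
      have hef : (∅ \ {e} : Set ↥G.edgeSet).ncard = 0 := by simp
      rw [hef]
      have hempty : (∅ : Set Bool).ncard = 0 := Set.ncard_empty _
      rw [hempty]
      have hsub1 : 2 + m + k - 1 = 1 + m + k := by omega
      rw [hsub1]
      -- goal : (0 + 0 + f) * (1 + m + k) ≤ (2 + m1 + d) * c
      simp only [Nat.zero_add]
      interval_cases a
      · have hd' : d = k := by omega
        have hf' : f ≤ c := by omega
        have : 2 + m1 + d = 1 + m + k := by omega
        rw [this, mul_comm]
        exact Nat.mul_le_mul_left _ hf'
      · have hd' : d + 1 = k := by omega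
        have ha2' : a2 = 1 := by omega
        have hf' : f + 1 = c := by omega
        have h1 : 2 + m1 + d = m + k := by omega
        rw [h1, ← hf']
        have hfle : f ≤ m + k := by omega
        calc f * (1 + m + k) = f * (m + k) + f := by ring
          _ ≤ f * (m + k) + (m + k) := by omega
          _ = (m + k) * (f + 1) := by ring
    · rw [degIn_v, hpMc]
      simp
  · rintro ⟨S, ⟨hproper, h2card, hcond⟩, hsize⟩
    set b := (pB G S).ncard with hb_def
    set q := (pM G S).ncard with hq_def
    set p := (pN G S).ncard with hp_def
    have hs : S.ncard = b + q + p := ncard_decomp G S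
    have hb2 : b + (pB G S)ᶜ.ncard = 2 := by
      rw [hb_def, Set.ncard_add_ncard_compl, Nat.card_eq_fintype_card, Fintype.card_bool]
    have hqm : q + (pM G S)ᶜ.ncard = m := by
      rw [hq_def, Set.ncard_add_ncard_compl, Nat.card_coe_set_eq]
    have hpn : p + (pN G S)ᶜ.ncard = n := by
      rw [hp_def, Set.ncard_add_ncard_compl, Nat.card_eq_fintype_card]
    have ht : Sᶜ.ncard = (pB G S)ᶜ.ncard + (pM G S)ᶜ.ncard + (pN G S)ᶜ.ncard := by
      rw [ncard_decomp, pB_compl, pM_compl, pN_compl]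
    have ht1 : 1 ≤ Sᶜ.ncard := by
      obtain ⟨x, -, hx⟩ := Set.exists_of_ssubset hproper
      exact (Set.ncard_pos (Set.toFinite _)).2 ⟨x, hx⟩
    -- Step 1: no edge-vertex of S has both endpoints in S ∩ N.
    have step1 : ∀ e : ↥G.edgeSet, e ∈ pM G S → ¬ (∀ v ∈ (e : Sym2 V), v ∈ pN G S) := by
      intro e he hall
      obtain ⟨x, y, hxy, hends⟩ := ends_spec G e
      have hmemxy : ∀ v : V, v ∈ (e : Sym2 V) ↔ v ∈ ({x, y} : Set V) := by
        intro v
        constructor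
        · intro hv; rw [← hends]; exact hv
        · intro hv; have : v ∈ {v : V | v ∈ (e : Sym2 V)} := hends ▸ hv; exact this
      have hx : x ∈ pN G S := hall x ((hmemxy x).2 (by simp))
      have hy : y ∈ pN G S := hall y ((hmemxy y).2 (by simp))
      have hcnd := hcond (Sum.inl (Sum.inr e)) he
      rw [degIn_e, degIn_e] at hcnd
      have hcompl : {u : V | u ∉ (e : Sym2 V)} = ({x, y} : Set V)ᶜ := by
        rw [← hends]; rfl
      rw [hcompl] at hcnd
      have hq1 : (pM G S \ {e}).ncard + 1 = q :=
        Set.ncard_diff_singleton_add_one he (Set.toFinite _)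
      have hxysub : ({x, y} : Set V) ⊆ pN G S := by
        rintro z (rfl | rfl) <;> assumption
      have hp2 : 2 ≤ p := by
        have := Set.ncard_le_ncard hxysub (Set.toFinite _)
        rwa [Set.ncard_pair (G.ne_of_adj hxy)] at this
      have hpint : pN G S ∩ ({x, y} : Set V)ᶜ = pN G S \ {x, y} := by rw [Set.diff_eq]
      have hpdiff : (pN G S \ ({x, y} : Set V)).ncard + 2 = p := by
        have h1 := Set.ncard_inter_add_ncard_diff_eq_ncard (pN G S) ({x, y} : Set V)
          (Set.toFinite _)
        have h2 : pN G S ∩ ({x, y} : Set V) = ({x, y} : Set V) :=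
          Set.inter_eq_self_of_subset_right hxysub
        rw [h2, Set.ncard_pair (G.ne_of_adj hxy)] at h1
        omega
      rw [pB_compl, pM_compl, pN_compl] at hcnd
      have hMc : (pM G S)ᶜ \ {e} = (pM G S)ᶜ :=
        Set.diff_singleton_eq_self (fun h => h he)
      have hNc : (pN G S)ᶜ ∩ ({x, y} : Set V)ᶜ = (pN G S)ᶜ := by
        apply Set.inter_eq_self_of_subset_left
        intro z hz
        rintro (rfl | rfl)
        · exact hz hx
        · exact hz hy
      rw [hMc, hNc, hpint] at hcnd
      rw [← ht] at hcnd
      have hX := hcnd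
      rw [mul_comm] at hX
      have hle : S.ncard - 1 ≤
          (pB G S).ncard + (pM G S \ {e}).ncard + (pN G S \ ({x, y} : Set V)).ncard :=
        Nat.le_of_mul_le_mul_right hX (by omega)
      have hbig : m + 2 + k ≤ S.ncard := hsize
      omega
    -- Step 2: extract an independent set.
    have hEsub : {e : ↥G.edgeSet | ∀ v ∈ (e : Sym2 V), v ∈ pN G S} ⊆ (pM G S)ᶜ :=
      fun e he hem => step1 e hem he
    have hEcard : {e : ↥G.edgeSet | ∀ v ∈ (e : Sym2 V), v ∈ pN G S}.ncard ≤ (pM G S)ᶜ.ncard :=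
      Set.ncard_le_ncard hEsub (Set.toFinite _)
    obtain ⟨I, hIsub, hIp, hInum⟩ := extract_indep G
      ({e : ↥G.edgeSet | ∀ v ∈ (e : Sym2 V), v ∈ pN G S}.ncard) (pN G S) le_rfl
    refine ⟨I, hIp, ?_⟩
    have hble : b ≤ 2 := by omega
    omega
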